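/- Suppose for each v ≠ v₀ the functor q_v* : C_v → D_v has a right adjoint q_{v*}. Then the functor j_* : C_{v₀} → F sending L to the tuple whose v₀-component is L, whose v-component is q_{v*}(θ_v*L), and whose structure map l_v : q_v*(q_{v*}θ_v*L) → θ_v*L is the counit of the adjunction, is right adjoint to the evaluation functor j* : F → C_{v₀}; moreover the counit j* ∘ j_* → id is an isomorphism, so j_* is fully faithful. -/

import Mathlib

open CategoryTheory Limits

universe u u₁ u₂

variable {V : Type u} (v₀ : V)
variable (C : V → Type u₁) [∀ v, Category.{u} (C v)]
variable (D : {v : V // v ≠ v₀} → Type u₂) [∀ p, Category.{u} (D p)]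
variable (q : ∀ p : {v : V // v ≠ v₀}, C p.1 ⥤ D p)
variable (θ : ∀ p : {v : V // v ≠ v₀}, C v₀ ⥤ D p)

/-- An object of the gluing category: a family `(F_v)_{v ∈ V}` of objects `F_v ∈ C_v`
(the component at the distinguished index `v₀` is `gen`, the components at `v ≠ v₀`
are `fib`), together with morphisms `f_v : q_v*(F_v) ⟶ θ_v*(F_{v₀})` in `D_v`. -/
structure Glued where
  gen : C v₀
  fib : ∀ p : {v : V // v ≠ v₀}, C p.1
  spec : ∀ p : {v : V // v ≠ v₀}, (q p).obj (fib p) ⟶ (θ p).obj gen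

namespace Glued

variable {v₀ C D q θ}

/-- A morphism in the gluing category: a family of componentwise morphisms compatible
with the structure maps. -/
@[ext]
structure Hom (F G : Glued v₀ C D q θ) where
  appGen : F.gen ⟶ G.gen
  appFib : ∀ p, F.fib p ⟶ G.fib p
  comm : ∀ p, F.spec p ≫ (θ p).map appGen = (q p).map (appFib p) ≫ G.spec p := by
    aesop_cat

instance : Category (Glued v₀ C D q θ) where
  Hom F G := Hom F G
  id F := { appGen := 𝟙 _, appFib := fun _ => 𝟙 _, comm := by simp }
  comp f g :=
    { appGen := f.appGen ≫ g.appGen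
      appFib := fun p => f.appFib p ≫ g.appFib p
      comm := fun p => by
        rw [Functor.map_comp, Functor.map_comp, ← Category.assoc, f.comm p,
          Category.assoc, g.comm p, Category.assoc] }
  id_comp f := by apply Hom.ext <;> simp
  comp_id f := by apply Hom.ext <;> simp
  assoc f g h := by apply Hom.ext <;> simp

/-- The evaluation functor at the distinguished index `v₀`. -/
@[simps]
def evalGen : Glued v₀ C D q θ ⥤ C v₀ where
  obj F := F.gen
  map f := f.appGen

/-- The evaluation functor at an index `v ≠ v₀`. -/
@[simps]
def evalFib (p : {v : V // v ≠ v₀}) : Glued v₀ C D q θ ⥤ C p.1 where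
  obj F := F.fib p
  map f := f.appFib p

@[simp] theorem id_appGen (F : Glued v₀ C D q θ) : Hom.appGen (𝟙 F) = 𝟙 F.gen := rfl

@[simp] theorem id_appFib (F : Glued v₀ C D q θ) (p : {v : V // v ≠ v₀}) :
    Hom.appFib (𝟙 F) p = 𝟙 (F.fib p) := rfl

@[simp] theorem comp_appGen {F G H : Glued v₀ C D q θ} (f : F ⟶ G) (g : G ⟶ H) :
    Hom.appGen (f ≫ g) = Hom.appGen f ≫ Hom.appGen g := rfl

@[simp] theorem comp_appFib {F G H : Glued v₀ C D q θ} (f : F ⟶ G) (g : G ⟶ H)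
    (p : {v : V // v ≠ v₀}) :
    Hom.appFib (f ≫ g) p = Hom.appFib f p ≫ Hom.appFib g p := rfl

end Glued

variable (r : ∀ p : {v : V // v ≠ v₀}, D p ⥤ C p.1)
variable (adj : ∀ p, q p ⊣ r p)

namespace Glued

/-- `j_* : C_{v₀} ⥤ F`, the direct image of the distinguished component: the
`v₀`-component of `j_* L` is `L`, the `v`-component is `q_{v*}(θ_v^* L)` and the
structure map is the counit of the adjunction `q_v^* ⊣ q_{v*}`. -/
noncomputable def jStar : C v₀ ⥤ Glued v₀ C D q θ where
  obj L :=
    { gen := L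
      fib := fun p => (r p).obj ((θ p).obj L)
      spec := fun p => (adj p).counit.app ((θ p).obj L) }
  map φ :=
    { appGen := φ
      appFib := fun p => (r p).map ((θ p).map φ)
      comm := fun p => ((adj p).counit.naturality ((θ p).map φ)).symm }
  map_id L := Hom.ext rfl (funext fun p => by simp)
  map_comp φ ψ := Hom.ext rfl (funext fun p => by simp)

end Glued

/-- `j_*` is right adjoint to the evaluation functor `j* : F ⥤ C_{v₀}` at the
distinguished component, the counit `j* ∘ j_* → id` of the adjunction is an
isomorphism, and hence `j_*` is fully faithful. -/
theorem Glued.jStar_rightAdjoint_counit_isIso :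
    (∃ a : Glued.evalGen (v₀ := v₀) ⊣ Glued.jStar v₀ C D q θ r adj, IsIso a.counit) ∧
      (Glued.jStar v₀ C D q θ r adj).Full ∧ (Glued.jStar v₀ C D q θ r adj).Faithful := by
  let a : Glued.evalGen (v₀ := v₀) ⊣ Glued.jStar v₀ C D q θ r adj :=
    Adjunction.mkOfUnitCounit
      { unit :=
          { app := fun F =>
              { appGen := 𝟙 F.gen
                appFib := fun p => (adj p).unit.app (F.fib p) ≫ (r p).map (F.spec p)
                comm := fun p => by
                  have h := (adj p).counit.naturality (F.spec p)
                  dsimp at h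
                  dsimp [jStar]
                  erw [Functor.map_comp, Category.assoc, h,
                    ← Category.assoc, (adj p).left_triangle_components (F.fib p),
                    Category.id_comp]
                  erw [(θ p).map_id]
                  exact Category.comp_id _ }
            naturality := fun F G f => by
              apply Hom.ext
              · exact (Category.comp_id _).trans (Category.id_comp _).symm
              · funext p
                have h := (adj p).unit.naturality (f.appFib p)
                dsimp at h
                dsimp [jStar]
                erw [← Category.assoc, h, Category.assoc, ← Functor.map_comp,
                  ← f.comm p]
                erw [(r p).map_comp]
                exact (Category.assoc _ _ _).symm }
        counit :=
          { app := fun L => 𝟙 L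
            naturality := fun L M φ => (Category.comp_id _).trans (Category.id_comp _).symm }
        left_triangle := by
          ext F
          exact (Category.id_comp _).trans (Category.id_comp _)
        right_triangle := by
          ext L
          apply Hom.ext
          · simp [jStar]
            exact Category.id_comp _
          · funext p
            dsimp [jStar]
            erw [(θ p).map_id, (r p).map_id, Category.id_comp, Category.comp_id,
              (adj p).right_triangle_components ((θ p).obj L)] }
  have hc : IsIso a.counit := by
    have : ∀ L, IsIso (a.counit.app L) := fun L => by
      show IsIso (𝟙 L)
      infer_instance
    apply NatIso.isIso_of_isIso_app
  have ff := a.fullyFaithfulROfIsIsoCounit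
  exact ⟨⟨a, hc⟩, ff.full, ff.faithful⟩
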